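/- In the Brandt semigroup B_n, for nonzero b = (b¹,b²): the equation x² = b·x has exactly n² − 2n + 3 solutions if b¹ = b², and exactly n² − 2n + 2 solutions if b¹ ≠ b². -/

import Mathlib

/-- The Brandt semigroup `B_n`: `none` is the zero element `0`, and
`some (i, j)` is the element `(i, j)` with `i, j ∈ {1, …, n}` (as `Fin n`). -/
abbrev Brandt (n : ℕ) : Type := Option (Fin n × Fin n)

/-- Multiplication on the Brandt semigroup. -/
def bmul {n : ℕ} : Brandt n → Brandt n → Brandt n
  | some (e, k), some (l, m) => if k = l then some (e, m) else none
  | _, _ => none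

lemma brandt_count (n : ℕ) (b : Fin n × Fin n) :
    Nat.card {x : Brandt n // bmul x x = bmul (some b) x} =
      1 + ((n-1)*(n-1) + if b.1 = b.2 then 1 else 0) := by
  classical
  rw [Nat.card_eq_fintype_card, Fintype.card_subtype, Finset.card_filter,
    Fintype.sum_option, Fintype.sum_prod_type]
  simp only [bmul]
  have h1 : ∀ i : Fin n,
      (∑ j : Fin n, if (if j = i then some (i, j) else none) =
          (if b.2 = i then some (b.1, j) else none) then 1 else 0) =
      if b.2 = i then (if b.1 = b.2 then 1 else 0) else (n - 1) := by
    intro i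
    by_cases hi : b.2 = i
    · subst hi
      rw [if_pos rfl]
      have e : ∀ j : Fin n, (if (if j = b.2 then some (b.2, j) else none) =
          (if (b.2 : Fin n) = b.2 then some (b.1, j) else none) then 1 else 0) =
          if j = b.2 then (if b.1 = b.2 then 1 else 0) else 0 := by
        intro j
        by_cases hj : j = b.2 <;> by_cases hb : b.1 = b.2 <;>
          simp [hj, hb, Prod.ext_iff, eq_comm]
      rw [Finset.sum_congr rfl (fun j _ => e j), Finset.sum_ite_eq' Finset.univ b.2]
      simp
    · rw [if_neg hi]
      have e : ∀ j : Fin n, (if (if j = i then some (i, j) else none) =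
          (if b.2 = i then some (b.1, j) else none) then 1 else 0) =
          if j = i then 0 else 1 := by
        intro j
        by_cases hj : j = i <;> simp [hj, hi]
      rw [Finset.sum_congr rfl (fun j _ => e j)]
      simp [Finset.sum_ite, Finset.filter_ne', Finset.card_erase_of_mem]
  erw [Finset.sum_congr rfl (fun i _ => h1 i)]
  rw [← Finset.add_sum_erase Finset.univ _ (Finset.mem_univ b.2), if_pos rfl]
  rw [Finset.sum_congr rfl (fun i hi => if_neg (Finset.ne_of_mem_erase hi ∘ Eq.symm))]
  rw [Finset.sum_const, Finset.card_erase_of_mem (Finset.mem_univ b.2), Finset.card_univ,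
    Fintype.card_fin, smul_eq_mul]
  simp [Nat.add_comm]

/-- Solutions of `x² = b·x` in `B_n` for nonzero `b = (b¹,b²)`: exactly
`n² − 2n + 3` solutions if `b¹ = b²`, and exactly `n² − 2n + 2` if `b¹ ≠ b²`. -/
theorem brandt_eq_sq_lmul (n : ℕ) (b : Fin n × Fin n) :
    (b.1 = b.2 →
      Nat.card {x : Brandt n // bmul x x = bmul (some b) x} =
        n ^ 2 + 3 - 2 * n) ∧
    (b.1 ≠ b.2 →
      Nat.card {x : Brandt n // bmul x x = bmul (some b) x} =
        n ^ 2 + 2 - 2 * n) := by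
  have hn : 0 < n := b.1.pos
  obtain ⟨m, rfl⟩ : ∃ m, n = m + 1 := ⟨n - 1, by omega⟩
  have hsq : (m + 1) ^ 2 = m * m + 2 * m + 1 := by ring
  refine ⟨fun h => ?_, fun h => ?_⟩ <;> rw [brandt_count] <;>
    simp only [h, if_true, if_false, ite_true, ite_false, Nat.add_sub_cancel] <;> omega
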